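/- Let m ≥ 2 and let a,b,c,d be integers in {1,...,m-1} with a+b+c+d ≡ 0 (mod m). Write A_m(i) = ⟨i⟩_m(m - ⟨i⟩_m). If a+b+c+d = 2m, then A_m(a)+A_m(b)+A_m(c)+A_m(a+b+c) - A_m(a+b) - A_m(a+c) - A_m(b+c) = 2m · min{a, b, c, d, m-a, m-b, m-c, m-d}, where the sums a+b+c, a+b, a+c, b+c are taken modulo m. -/

import Mathlib

private lemma mod_sub (m x : ℤ) (h0 : m ≤ x) (h1 : x < 2*m) : x % m = x - m :=
  calc x % m = (x - m) % m := (Int.sub_emod_right x m).symm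
    _ = x - m := Int.emod_eq_of_lt (by omega) (by omega)

/-- The F-nefness defect of the standard function in the case `a+b+c+d = 2m`. -/
theorem stmt4 (m a b c d : ℤ) (hm : 2 ≤ m)
    (ha : 1 ≤ a ∧ a ≤ m - 1) (hb : 1 ≤ b ∧ b ≤ m - 1)
    (hc : 1 ≤ c ∧ c ≤ m - 1) (hd : 1 ≤ d ∧ d ≤ m - 1)
    (hsum : a + b + c + d = 2 * m) :
    let A : ℤ → ℤ := fun k => (k % m) * (m - k % m)
    A a + A b + A c + A (a + b + c) - A (a + b) - A (a + c) - A (b + c)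
      = 2 * m * min (min (min a b) (min c d))
          (min (min (m - a) (m - b)) (min (m - c) (m - d))) := by
  intro A
  obtain ⟨ha1, ha2⟩ := ha
  obtain ⟨hb1, hb2⟩ := hb
  obtain ⟨hc1, hc2⟩ := hc
  obtain ⟨hd1, hd2⟩ := hd
  have hd' : d = 2 * m - a - b - c := by omega
  subst hd'
  have ea : a % m = a := Int.emod_eq_of_lt (by omega) (by omega)
  have eb : b % m = b := Int.emod_eq_of_lt (by omega) (by omega)
  have ec : c % m = c := Int.emod_eq_of_lt (by omega) (by omega)
  have eabc : (a + b + c) % m = a + b + c - m := mod_sub m _ (by omega) (by omega)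
  simp only [A, ea, eb, ec, eabc]
  rcases lt_or_ge (a + b) m with h1 | h1 <;>
  rcases lt_or_ge (a + c) m with h2 | h2 <;>
  rcases lt_or_ge (b + c) m with h3 | h3
  · rw [Int.emod_eq_of_lt (by omega) h1, Int.emod_eq_of_lt (by omega) h2,
      Int.emod_eq_of_lt (by omega) h3,
      show min (min (min a b) (min c (2 * m - a - b - c)))
          (min (min (m - a) (m - b)) (min (m - c) (m - (2 * m - a - b - c))))
          = m - (2 * m - a - b - c) by omega]
    ring
  · rw [Int.emod_eq_of_lt (by omega) h1, Int.emod_eq_of_lt (by omega) h2,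
      mod_sub m _ h3 (by omega),
      show min (min (min a b) (min c (2 * m - a - b - c)))
          (min (min (m - a) (m - b)) (min (m - c) (m - (2 * m - a - b - c))))
          = a by omega]
    ring
  · rw [Int.emod_eq_of_lt (by omega) h1, mod_sub m _ h2 (by omega),
      Int.emod_eq_of_lt (by omega) h3,
      show min (min (min a b) (min c (2 * m - a - b - c)))
          (min (min (m - a) (m - b)) (min (m - c) (m - (2 * m - a - b - c))))
          = b by omega]
    ring
  · rw [Int.emod_eq_of_lt (by omega) h1, mod_sub m _ h2 (by omega),
      mod_sub m _ h3 (by omega),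
      show min (min (min a b) (min c (2 * m - a - b - c)))
          (min (min (m - a) (m - b)) (min (m - c) (m - (2 * m - a - b - c))))
          = m - c by omega]
    ring
  · rw [mod_sub m _ h1 (by omega), Int.emod_eq_of_lt (by omega) h2,
      Int.emod_eq_of_lt (by omega) h3,
      show min (min (min a b) (min c (2 * m - a - b - c)))
          (min (min (m - a) (m - b)) (min (m - c) (m - (2 * m - a - b - c))))
          = c by omega]
    ring
  · rw [mod_sub m _ h1 (by omega), Int.emod_eq_of_lt (by omega) h2,
      mod_sub m _ h3 (by omega),
      show min (min (min a b) (min c (2 * m - a - b - c)))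
          (min (min (m - a) (m - b)) (min (m - c) (m - (2 * m - a - b - c))))
          = m - b by omega]
    ring
  · rw [mod_sub m _ h1 (by omega), mod_sub m _ h2 (by omega),
      Int.emod_eq_of_lt (by omega) h3,
      show min (min (min a b) (min c (2 * m - a - b - c)))
          (min (min (m - a) (m - b)) (min (m - c) (m - (2 * m - a - b - c))))
          = m - a by omega]
    ring
  · rw [mod_sub m _ h1 (by omega), mod_sub m _ h2 (by omega),
      mod_sub m _ h3 (by omega),
      show min (min (min a b) (min c (2 * m - a - b - c)))
          (min (min (m - a) (m - b)) (min (m - c) (m - (2 * m - a - b - c))))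
          = 2 * m - a - b - c by omega]
    ring
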